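/- Let A be a bounded Fredholm operator of index zero on a Banach space Y. Then the supremum of ν(A+K) over all compact operators K equals the reciprocal of the quotient norm of A's regularizer: sup{ν(A+K) : K compact} = (inf{‖(A+K)⁻¹‖ : K compact, A+K invertible})⁻¹. Equivalently, ν_ess(A) = ‖(A + K(Y))⁻¹‖⁻¹ in the Calkin algebra, using the convention that ‖b⁻¹‖⁻¹ = 0 when b is not invertible. -/

import Mathlib

open ContinuousLinearMap Metric Filter Topology

set_option synthInstance.maxHeartbeats 1000000
set_option maxHeartbeats 4000000
set_option linter.unusedSectionVars false

section Helpers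


open ContinuousLinearMap Metric

variable {Y : Type*} [NormedAddCommGroup Y] [NormedSpace ℝ Y]

/-- The set whose infimum is the lower norm. -/
def lowSet (T : Y →L[ℝ] Y) : Set ℝ := {s : ℝ | ∃ x : Y, ‖x‖ = 1 ∧ s = ‖T x‖}

lemma exists_norm_one [Nontrivial Y] : ∃ x : Y, ‖x‖ = 1 := by
  obtain ⟨x, hx⟩ := exists_ne (0 : Y)
  refine ⟨‖x‖⁻¹ • x, ?_⟩
  rw [norm_smul, norm_inv, norm_norm, inv_mul_cancel₀ (norm_ne_zero_iff.2 hx)]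

lemma lowSet_nonempty [Nontrivial Y] (T : Y →L[ℝ] Y) : (lowSet T).Nonempty := by
  obtain ⟨x, hx⟩ := exists_norm_one (Y := Y)
  exact ⟨‖T x‖, x, hx, rfl⟩

lemma lowSet_bddBelow (T : Y →L[ℝ] Y) : BddBelow (lowSet T) :=
  ⟨0, by rintro s ⟨x, hx, rfl⟩; positivity⟩

lemma nu_nonneg (T : Y →L[ℝ] Y) : 0 ≤ sInf (lowSet T) :=
  Real.sInf_nonneg (by rintro s ⟨x, hx, rfl⟩; positivity)

lemma nu_le (T : Y →L[ℝ] Y) {x : Y} (hx : ‖x‖ = 1) : sInf (lowSet T) ≤ ‖T x‖ :=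
  csInf_le (lowSet_bddBelow T) ⟨x, hx, rfl⟩

lemma injective_of_nu_pos {T : Y →L[ℝ] Y} (h : 0 < sInf (lowSet T)) :
    Function.Injective T := by
  have key : ∀ x : Y, T x = 0 → x = 0 := by
    intro x hx
    by_contra hx0
    have hxu : ‖(‖x‖⁻¹ • x : Y)‖ = 1 := by
      rw [norm_smul, norm_inv, norm_norm, inv_mul_cancel₀ (norm_ne_zero_iff.2 hx0)]
    have hle := nu_le T hxu
    rw [map_smul, hx] at hle
    simp at hle
    exact absurd (h.trans_le hle) (lt_irrefl _)
  intro a b hab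
  have hsub : T (a - b) = 0 := by rw [map_sub, hab, sub_self]
  exact sub_eq_zero.mp (key _ hsub)

/-- For invertible `T` with inverse `B`, the lower norm equals `‖B‖⁻¹`. -/
lemma nu_of_inverse [Nontrivial Y] {T B : Y →L[ℝ] Y}
    (h1 : T.comp B = ContinuousLinearMap.id ℝ Y)
    (h2 : B.comp T = ContinuousLinearMap.id ℝ Y) :
    sInf (lowSet T) = ‖B‖⁻¹ := by
  have hBT : ∀ x, B (T x) = x := fun x => by
    have := congrArg (fun f => f x) h2; simpa using this
  have hTB : ∀ x, T (B x) = x := fun x => by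
    have := congrArg (fun f => f x) h1; simpa using this
  have hBne : B ≠ 0 := by
    intro h0
    obtain ⟨x, hx⟩ := exists_ne (0 : Y)
    exact hx (by rw [← hBT x, h0]; simp)
  have hB : (0:ℝ) < ‖B‖ := norm_pos_iff.2 hBne
  refine le_antisymm ?_ ?_
  · -- sInf ≤ ‖B‖⁻¹
    by_contra hlt
    push_neg at hlt
    have hnu : (0:ℝ) < sInf (lowSet T) := lt_trans (by positivity) hlt
    have key : ∀ y : Y, ‖B y‖ ≤ (sInf (lowSet T))⁻¹ * ‖y‖ := by
      intro y
      rcases eq_or_ne y 0 with rfl | hy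
      · simp
      · have hBy : B y ≠ 0 := fun h0 => hy (by rw [← hTB y, h0]; simp)
        have hu : ‖(‖B y‖⁻¹ • B y : Y)‖ = 1 := by
          rw [norm_smul, norm_inv, norm_norm, inv_mul_cancel₀ (norm_ne_zero_iff.2 hBy)]
        have := nu_le T hu
        rw [map_smul, hTB, norm_smul, norm_inv, norm_norm] at this
        have h3 : sInf (lowSet T) * ‖B y‖ ≤ ‖y‖ := by
          calc sInf (lowSet T) * ‖B y‖ ≤ (‖B y‖⁻¹ * ‖y‖) * ‖B y‖ :=
                mul_le_mul_of_nonneg_right this (norm_nonneg _)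
            _ = ‖y‖ := by
              rw [mul_comm (‖B y‖⁻¹) (‖y‖), mul_assoc, inv_mul_cancel₀ (norm_ne_zero_iff.2 hBy), mul_one]
        rw [inv_mul_eq_div, le_div_iff₀ hnu, mul_comm]
        exact h3
    have hle : ‖B‖ ≤ (sInf (lowSet T))⁻¹ :=
      B.opNorm_le_bound (by positivity) key
    have : ‖B‖ < ‖B‖ := by
      calc ‖B‖ ≤ (sInf (lowSet T))⁻¹ := hle
        _ < (‖B‖⁻¹)⁻¹ := by
            exact inv_strictAnti₀ (by positivity) hlt
        _ = ‖B‖ := inv_inv _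
    exact absurd this (lt_irrefl _)
  · -- ‖B‖⁻¹ ≤ sInf
    refine le_csInf (lowSet_nonempty T) ?_
    rintro s ⟨x, hx, rfl⟩
    have h1' : (1:ℝ) ≤ ‖B‖ * ‖T x‖ := by
      calc (1:ℝ) = ‖x‖ := hx.symm
        _ = ‖B (T x)‖ := by rw [hBT]
        _ ≤ ‖B‖ * ‖T x‖ := B.le_opNorm _
    rw [inv_le_iff_one_le_mul₀ hB]
    linarith [h1']


variable {Y : Type*} [NormedAddCommGroup Y] [NormedSpace ℝ Y] [CompleteSpace Y]

/-- An injective operator of the form `1 + compact` is bounded below. -/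
lemma bounded_below_of_injective_one_add_compact {C : Y →L[ℝ] Y}
    (hC : IsCompactOperator ⇑C) (hinj : Function.Injective ⇑(1 + C)) :
    ∃ c : ℝ, 0 < c ∧ ∀ x : Y, c * ‖x‖ ≤ ‖(1 + C) x‖ := by
  by_contra hcon
  push_neg at hcon
  -- build unit vectors uₙ with ‖(1+C) uₙ‖ < 1/(n+1)
  have hseq : ∀ n : ℕ, ∃ u : Y, ‖u‖ = 1 ∧ ‖(1 + C) u‖ < (n + 1 : ℝ)⁻¹ := by
    intro n
    obtain ⟨x, hx⟩ := hcon ((n + 1 : ℝ)⁻¹) (by positivity)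
    have hx0 : x ≠ 0 := by
      intro h0; rw [h0] at hx; simp at hx
    refine ⟨‖x‖⁻¹ • x, ?_, ?_⟩
    · rw [norm_smul, norm_inv, norm_norm, inv_mul_cancel₀ (norm_ne_zero_iff.2 hx0)]
    · rw [map_smul, norm_smul, norm_inv, norm_norm]
      rw [inv_mul_lt_iff₀ (norm_pos_iff.2 hx0)]
      calc ‖(1 + C) x‖ < (n + 1 : ℝ)⁻¹ * ‖x‖ := hx
        _ = ‖x‖ * (n + 1 : ℝ)⁻¹ := mul_comm _ _
  choose u hu1 hu2 using hseq
  -- (1+C) uₙ → 0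
  have hT0 : Tendsto (fun n => (1 + C) (u n)) atTop (𝓝 0) := by
    rw [tendsto_zero_iff_norm_tendsto_zero]
    refine squeeze_zero (fun n => norm_nonneg _) (fun n => (hu2 n).le) ?_
    exact tendsto_one_div_add_atTop_nhds_zero_nat.congr (by intro n; rw [one_div])
  -- compactness: subsequence with C u_{φ n} → a
  have hmem : ∀ n, C (u n) ∈ closure (⇑C '' closedBall 0 1) := fun n =>
    subset_closure ⟨u n, by simp [mem_closedBall_zero_iff, (hu1 n).le], rfl⟩
  obtain ⟨a, -, φ, hφ, ha⟩ :=
    (hC.isCompact_closure_image_closedBall (f := (C : Y →ₗ[ℝ] Y)) 1).tendsto_subseq hmem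
  have hTφ : Tendsto (fun n => (1 + C) (u (φ n))) atTop (𝓝 0) :=
    hT0.comp hφ.tendsto_atTop
  have huφ : Tendsto (fun n => u (φ n)) atTop (𝓝 (-a)) := by
    have : (fun n => u (φ n)) = fun n => (1 + C) (u (φ n)) - C (u (φ n)) := by
      funext n; simp [ContinuousLinearMap.add_apply]
    rw [this]
    simpa using hTφ.sub ha
  have hna : ‖-a‖ = 1 := by
    have := (continuous_norm.tendsto (-a)).comp huφ
    have h1 : Tendsto (fun n => ‖u (φ n)‖) atTop (𝓝 ‖-a‖) := this
    have h2 : Tendsto (fun n : ℕ => (1:ℝ)) atTop (𝓝 1) := tendsto_const_nhds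
    exact tendsto_nhds_unique (h1.congr (by intro n; simp [hu1])) h2
  have hTa : (1 + C) (-a) = 0 := by
    have := ((1 + C).continuous.tendsto (-a)).comp huφ
    exact tendsto_nhds_unique this hTφ
  have : (-a : Y) = 0 := hinj (by rw [hTa]; simp)
  rw [this] at hna; simp at hna

set_option maxHeartbeats 1000000 in
/-- Riesz–Schauder: an injective operator of the form `1 + compact` on a Banach
space is surjective. -/
lemma surjective_of_injective_one_add_compact {C : Y →L[ℝ] Y}
    (hC : IsCompactOperator ⇑C) (hinj : Function.Injective ⇑(1 + C)) :
    Function.Surjective ⇑(1 + C) := by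
  set T : Y →L[ℝ] Y := 1 + C with hT
  obtain ⟨c, hc, hbb⟩ := bounded_below_of_injective_one_add_compact hC hinj
  by_contra hsurj
  rw [← Set.range_eq_univ] at hsurj
  obtain ⟨y, hy⟩ : ∃ y : Y, y ∉ LinearMap.range (T : Y →ₗ[ℝ] Y) := by
    by_contra h; push_neg at h
    apply hsurj
    apply Set.eq_univ_of_forall
    intro z
    obtain ⟨x, hx⟩ := LinearMap.mem_range.mp (h z)
    exact ⟨x, hx⟩
  -- the chain of ranges of powers
  set U : ℕ → Submodule ℝ Y := fun n => LinearMap.range ((T ^ n : Y →L[ℝ] Y) : Y →ₗ[ℝ] Y) with hU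
  have hTpow : ∀ n (x : Y), (T ^ (n+1) : Y →L[ℝ] Y) x = T ((T ^ n : Y →L[ℝ] Y) x) := by
    intro n x
    rw [pow_succ']
    rfl
  -- T^n is bounded below
  have hbbn : ∀ n (x : Y), c ^ n * ‖x‖ ≤ ‖(T ^ n : Y →L[ℝ] Y) x‖ := by
    intro n
    induction n with
    | zero => intro x; simp
    | succ n ih =>
      intro x
      calc c ^ (n+1) * ‖x‖ = c * (c ^ n * ‖x‖) := by ring
        _ ≤ c * ‖(T ^ n : Y →L[ℝ] Y) x‖ :=
            mul_le_mul_of_nonneg_left (ih x) hc.le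
        _ ≤ ‖T ((T ^ n : Y →L[ℝ] Y) x)‖ := hbb _
        _ = ‖(T ^ (n+1) : Y →L[ℝ] Y) x‖ := by rw [hTpow]
  -- T^n injective
  have hinjn : ∀ n, Function.Injective ⇑(T ^ n : Y →L[ℝ] Y) := by
    intro n
    induction n with
    | zero => simpa using Function.injective_id
    | succ n ih =>
      intro a b hab
      rw [hTpow, hTpow] at hab
      exact ih (hinj hab)
  -- U is closed
  have hUclosed : ∀ n, IsClosed (U n : Set Y) := by
    intro n
    have hal : AntilipschitzWith (⟨c ^ n, by positivity⟩ : NNReal)⁻¹ ⇑(T ^ n : Y →L[ℝ] Y) := by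
      apply ContinuousLinearMap.antilipschitz_of_bound
      intro x
      show ‖x‖ ≤ ((c ^ n : ℝ))⁻¹ * ‖(T ^ n : Y →L[ℝ] Y) x‖
      rw [le_inv_mul_iff₀ (by positivity)]
      exact hbbn n x
    have := hal.isClosed_range (T ^ n : Y →L[ℝ] Y).uniformContinuous
    exact this
  -- U is a decreasing chain
  have hUsucc : ∀ n, U (n+1) ≤ U n := by
    intro n
    rintro z ⟨x, rfl⟩
    change (T ^ (n+1) : Y →L[ℝ] Y) x ∈ U n
    rw [show ((T ^ (n+1) : Y →L[ℝ] Y)) x = (T ^ n : Y →L[ℝ] Y) (T x) by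
      rw [pow_succ]; rfl]
    exact ⟨T x, rfl⟩
  have hUmono : ∀ m n, m ≤ n → U n ≤ U m := by
    intro m n hmn
    induction n with
    | zero => rw [Nat.le_zero.mp hmn]
    | succ n ih =>
      rcases Nat.lt_or_ge m (n+1) with h | h
      · exact le_trans (hUsucc n) (ih (Nat.lt_succ_iff.mp h))
      · rw [Nat.le_antisymm hmn h]
  -- strictness witness
  have hstrict : ∀ n, (T ^ n : Y →L[ℝ] Y) y ∈ U n ∧ (T ^ n : Y →L[ℝ] Y) y ∉ U (n+1) := by
    intro n
    refine ⟨⟨y, rfl⟩, ?_⟩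
    rintro ⟨z, hz⟩
    apply hy
    have : (T ^ n : Y →L[ℝ] Y) (T z) = (T ^ n : Y →L[ℝ] Y) y := by
      rw [← hz, pow_succ]; rfl
    exact ⟨z, hinjn n this⟩
  -- Riesz sequence: xₙ ∈ Uₙ, ‖xₙ‖ = 1, dist to U_{n+1} ≥ 1/2
  have hriesz : ∀ n, ∃ x : Y, x ∈ U n ∧ ‖x‖ = 1 ∧ ∀ z ∈ U (n+1), (2⁻¹ : ℝ) ≤ ‖x - z‖ := by
    intro n
    set E := ↥(U n)
    set F : Submodule ℝ E := (U (n+1)).comap (U n).subtype with hF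
    have hFclosed : IsClosed (F : Set E) := by
      have : (F : Set E) = ((U n).subtype) ⁻¹' (U (n+1) : Set Y) := rfl
      rw [this]
      exact (hUclosed (n+1)).preimage (U n).subtypeL.continuous
    have hFne : ∃ x : E, x ∉ F := by
      refine ⟨⟨(T ^ n : Y →L[ℝ] Y) y, (hstrict n).1⟩, ?_⟩
      intro hmem
      exact (hstrict n).2 hmem
    obtain ⟨x₀, hx₀F, hx₀⟩ := riesz_lemma hFclosed hFne (show (2⁻¹ : ℝ) < 1 by norm_num)
    have hx₀ne : x₀ ≠ 0 := fun h0 => hx₀F (h0 ▸ F.zero_mem)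
    have hnx₀ : (0:ℝ) < ‖x₀‖ := norm_pos_iff.2 hx₀ne
    refine ⟨(‖x₀‖⁻¹ • x₀ : E), Submodule.coe_mem _, ?_, ?_⟩
    · rw [Submodule.norm_coe, norm_smul, Real.norm_eq_abs, abs_inv, abs_norm,
        inv_mul_cancel₀ hnx₀.ne']
    · intro z hz
      have hzUn : z ∈ U n := hUsucc n hz
      set z' : E := ⟨z, hzUn⟩ with hz'
      have hz'F : (‖x₀‖ • z' : E) ∈ F := F.smul_mem _ (by exact hz)
      have hr := hx₀ _ hz'F
      have key : (‖x₀‖⁻¹ • x₀ : E) - z' = ‖x₀‖⁻¹ • (x₀ - ‖x₀‖ • z') := by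
        rw [smul_sub, smul_smul, inv_mul_cancel₀ hnx₀.ne', one_smul]
      have hcoe : ((‖x₀‖⁻¹ • x₀ : E) : Y) - z = (((‖x₀‖⁻¹ • x₀ : E) - z' : E) : Y) := by
        rw [Submodule.coe_sub]
      rw [hcoe, Submodule.norm_coe, key, norm_smul, Real.norm_eq_abs, abs_inv, abs_norm,
        le_inv_mul_iff₀ hnx₀]
      calc ‖x₀‖ * 2⁻¹ = 2⁻¹ * ‖x₀‖ := mul_comm _ _
        _ ≤ ‖x₀ - ‖x₀‖ • z'‖ := hr

  -- choose the Riesz sequence and derive a contradiction with compactness of C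
  choose x hxU hx1 hxd using hriesz
  have hmem : ∀ n, C (x n) ∈ closure (⇑C '' closedBall 0 1) := fun n =>
    subset_closure ⟨x n, by simp [mem_closedBall_zero_iff, (hx1 n).le], rfl⟩
  obtain ⟨a, -, φ, hφ, ha⟩ :=
    (hC.isCompact_closure_image_closedBall (f := (C : Y →ₗ[ℝ] Y)) 1).tendsto_subseq hmem
  -- pairwise separation of C xₙ
  have hsep : ∀ m n : ℕ, m < n → (2⁻¹ : ℝ) ≤ ‖C (x m) - C (x n)‖ := by
    intro m n hmn
    have hCx : ∀ k, C (x k) = T (x k) - x k := by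
      intro k; simp [hT, ContinuousLinearMap.add_apply]
    have hTm : T (x m) ∈ U (m+1) := by
      obtain ⟨w, hw⟩ := hxU m
      exact ⟨w, by rw [← hw, pow_succ']; rfl⟩
    have hTn : T (x n) ∈ U (m+1) :=
      hUmono (m+1) (n+1) (by omega) (by
        obtain ⟨w, hw⟩ := hxU n
        exact ⟨w, by rw [← hw, pow_succ']; rfl⟩)
    have hxn : x n ∈ U (m+1) := hUmono (m+1) n (by omega) (hxU n)
    have hzmem : T (x m) - T (x n) + x n ∈ U (m+1) :=
      (U (m+1)).add_mem ((U (m+1)).sub_mem hTm hTn) hxn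
    have := hxd m _ hzmem
    calc (2⁻¹ : ℝ) ≤ ‖x m - (T (x m) - T (x n) + x n)‖ := this
      _ = ‖C (x m) - C (x n)‖ := by
          rw [hCx, hCx, show (T (x m) - x m) - (T (x n) - x n)
              = -(x m - (T (x m) - T (x n) + x n)) from by abel, norm_neg]
  -- but C x_{φ k} converges, contradiction
  have hcauchy : ∃ k l : ℕ, k < l ∧ dist (C (x (φ k))) (C (x (φ l))) < 2⁻¹ := by
    have := Metric.tendsto_atTop.mp ha 4⁻¹ (by norm_num)
    obtain ⟨N, hN⟩ := this
    refine ⟨N, N+1, by omega, ?_⟩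
    calc dist (C (x (φ N))) (C (x (φ (N+1))))
        ≤ dist (C (x (φ N))) a + dist a (C (x (φ (N+1)))) := dist_triangle _ _ _
      _ < 4⁻¹ + 4⁻¹ := by
          have h1 := hN N (le_refl N)
          have h2 := hN (N+1) (by omega)
          rw [dist_comm a]
          exact add_lt_add h1 h2
      _ = 2⁻¹ := by norm_num
  obtain ⟨k, l, hkl, hd⟩ := hcauchy
  have hphikl : φ k < φ l := hφ hkl
  have := hsep (φ k) (φ l) hphikl
  rw [dist_eq_norm] at hd
  exact absurd (this.trans_lt hd) (lt_irrefl _)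





/-- An operator whose range lies in a finite dimensional submodule is compact. -/
lemma isCompactOperator_of_finiteRank {g : Y →L[ℝ] Y} {W : Submodule ℝ Y}
    [FiniteDimensional ℝ W] (hg : ∀ x, g x ∈ W) : IsCompactOperator ⇑g := by
  set g' : Y →L[ℝ] W := g.codRestrict W hg with hg'
  have hcomp : ⇑g = ⇑W.subtypeL ∘ ⇑g' := by funext x; rfl
  have hK : IsCompactOperator ⇑g' := by
    refine ⟨closedBall 0 ‖g'‖, isCompact_closedBall _ _, ?_⟩
    refine Filter.mem_of_superset (Metric.closedBall_mem_nhds 0 one_pos) ?_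
    intro x hx
    simp only [Set.mem_preimage, mem_closedBall_zero_iff] at *
    calc ‖g' x‖ ≤ ‖g'‖ * ‖x‖ := g'.le_opNorm x
      _ ≤ ‖g'‖ * 1 := by
          exact mul_le_mul_of_nonneg_left hx (norm_nonneg g')
      _ = ‖g'‖ := mul_one _
  rw [hcomp]
  exact hK.clm_comp W.subtypeL

/-- A Fredholm operator of index zero admits a finite rank (hence compact)
perturbation which is bijective. -/
lemma exists_compact_correction [CompleteSpace Y] (A : Y →L[ℝ] Y)
    (h1 : FiniteDimensional ℝ (LinearMap.ker (A : Y →ₗ[ℝ] Y)))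
    (h2 : IsClosed (LinearMap.range (A : Y →ₗ[ℝ] Y) : Set Y))
    (h3 : FiniteDimensional ℝ (Y ⧸ LinearMap.range (A : Y →ₗ[ℝ] Y)))
    (h4 : Module.finrank ℝ (LinearMap.ker (A : Y →ₗ[ℝ] Y)) =
      Module.finrank ℝ (Y ⧸ LinearMap.range (A : Y →ₗ[ℝ] Y))) :
    ∃ F : Y →L[ℝ] Y, IsCompactOperator ⇑F ∧ Function.Bijective ⇑(A + F) := by
  haveI := h1
  haveI := h3
  -- projection onto the kernel
  obtain ⟨π, hπ⟩ := Submodule.ClosedComplemented.of_finiteDimensional (LinearMap.ker (A : Y →ₗ[ℝ] Y))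
  -- complement of the range
  obtain ⟨W, hW⟩ := Submodule.exists_isCompl (LinearMap.range (A : Y →ₗ[ℝ] Y) : Submodule ℝ Y)
  haveI : FiniteDimensional ℝ W :=
    Module.Finite.equiv (Submodule.quotientEquivOfIsCompl _ W hW)
  have hfr : Module.finrank ℝ (LinearMap.ker (A : Y →ₗ[ℝ] Y)) = Module.finrank ℝ W := by
    rw [h4, (Submodule.quotientEquivOfIsCompl _ W hW).finrank_eq]
  -- isomorphism between kernel and complement
  obtain ⟨e⟩ := FiniteDimensional.nonempty_linearEquiv_of_finrank_eq hfr
  set e' : (LinearMap.ker (A : Y →ₗ[ℝ] Y)) →L[ℝ] W := LinearMap.toContinuousLinearMap e.toLinearMap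
  set F : Y →L[ℝ] Y := W.subtypeL.comp (e'.comp π) with hF
  have hFapp : ∀ x : Y, F x = (e' (π x) : Y) := fun x => rfl
  have hFW : ∀ x, F x ∈ W := fun x => (e' (π x)).2
  refine ⟨F, isCompactOperator_of_finiteRank hFW, ?_, ?_⟩
  · -- injective
    intro a b hab
    have hsub : A (a - b) + F (a - b) = 0 := by
      have : (A + F) (a - b) = 0 := by
        rw [map_sub, (show (A + F) a = (A + F) b from hab), sub_self]
      rw [← ContinuousLinearMap.add_apply]; exact this
    set x := a - b with hx
    have hAx : A x = -F x := eq_neg_of_add_eq_zero_left hsub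
    have hAxW : A x ∈ W := by rw [hAx]; exact W.neg_mem (hFW x)
    have hAx0 : A x = 0 :=
      (Submodule.disjoint_def.mp hW.disjoint) (A x) (LinearMap.mem_range_self _ x) hAxW
    have hFx0 : F x = 0 := by
      have := hAx; rw [hAx0] at this; exact (neg_eq_zero.mp this.symm)
    have hxker : x ∈ LinearMap.ker (A : Y →ₗ[ℝ] Y) := LinearMap.mem_ker.mpr hAx0
    have hπx : π x = ⟨x, hxker⟩ := hπ ⟨x, hxker⟩
    have he0 : (e' (π x) : Y) = 0 := by rw [← hFapp]; exact hFx0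
    have he0' : e' (π x) = 0 := by
      exact Subtype.ext (by simpa using he0)
    have hπ0 : π x = 0 := by
      have hinj : Function.Injective ⇑e' := by
        have : ⇑e' = ⇑e.toLinearMap := LinearMap.coe_toContinuousLinearMap' _
        rw [this]; exact e.injective
      exact hinj (by simpa using he0')
    have : (⟨x, hxker⟩ : LinearMap.ker (A : Y →ₗ[ℝ] Y)) = 0 := by rw [← hπx]; exact hπ0
    have hx0 : x = 0 := by simpa using congrArg Subtype.val this
    exact sub_eq_zero.mp hx0
  · -- surjective
    intro y
    have hytop : y ∈ (⊤ : Submodule ℝ Y) := trivial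
    rw [← (codisjoint_iff.mp hW.codisjoint)] at hytop
    obtain ⟨r, hr, w, hw, hrw⟩ := Submodule.mem_sup.mp hytop
    obtain ⟨m, hm⟩ := LinearMap.mem_range.mp hr
    set k : LinearMap.ker (A : Y →ₗ[ℝ] Y) := e.symm ⟨w, hw⟩ with hk
    refine ⟨m - (π m : Y) + (k : Y), ?_⟩
    have hA : A (m - (π m : Y) + (k : Y)) = r := by
      rw [map_add, map_sub, (show A m = r from hm)]
      have h5 : A ((π m : Y)) = 0 := (π m).2
      have h6 : A (k : Y) = 0 := k.2
      rw [h5, h6, sub_zero, add_zero]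
    have hπcalc : π (m - (π m : Y) + (k : Y)) = k := by
      rw [map_add, map_sub, hπ (π m), hπ k, sub_self, zero_add]
    have hFcalc : F (m - (π m : Y) + (k : Y)) = w := by
      rw [hFapp, hπcalc]
      have : ⇑e' = ⇑e.toLinearMap := LinearMap.coe_toContinuousLinearMap' _
      have he'k : e' k = ⟨w, hw⟩ := by
        rw [show e' k = e k from congrFun this k, hk]
        exact e.apply_symm_apply _
      rw [he'k]
    rw [ContinuousLinearMap.add_apply, hA, hFcalc, hrw]





/-- A bijective operator on a Banach space has a continuous two-sided inverse. -/
lemma exists_inverse_of_bijective (A : Y →L[ℝ] Y) (hbij : Function.Bijective ⇑A) :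
    ∃ B : Y →L[ℝ] Y, A.comp B = ContinuousLinearMap.id ℝ Y ∧
      B.comp A = ContinuousLinearMap.id ℝ Y := by
  have h1 : LinearMap.ker (A : Y →ₗ[ℝ] Y) = ⊥ := LinearMap.ker_eq_bot.mpr hbij.1
  have h2 : LinearMap.range (A : Y →ₗ[ℝ] Y) = ⊤ := LinearMap.range_eq_top.mpr hbij.2
  set e := ContinuousLinearEquiv.ofBijective A h1 h2 with he
  have hcoe : ⇑e = ⇑A := ContinuousLinearEquiv.coeFn_ofBijective A h1 h2
  refine ⟨(e.symm : Y →L[ℝ] Y), ?_, ?_⟩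
  · ext x
    show A ((e.symm : Y →L[ℝ] Y) x) = x
    rw [← hcoe]
    exact e.apply_symm_apply x
  · ext x
    show (e.symm : Y →L[ℝ] Y) (A x) = x
    rw [← hcoe]
    exact e.symm_apply_apply x

lemma finiteDimensional_of_isCompactOperator_id
    {Y : Type*} [NormedAddCommGroup Y] [NormedSpace ℝ Y] [CompleteSpace Y]
    (h : IsCompactOperator (fun x : Y => x)) : FiniteDimensional ℝ Y := by
  obtain ⟨K, hK, hmem⟩ := h
  have hmem' : K ∈ 𝓝 (0 : Y) := by simpa using hmem
  obtain ⟨ε, hε, hball⟩ := Metric.mem_nhds_iff.mp hmem'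
  have hsub : closedBall (0:Y) (ε/2) ⊆ K := fun x hx => by
    apply hball
    rw [mem_ball_zero_iff]
    rw [mem_closedBall_zero_iff] at hx
    linarith
  exact FiniteDimensional.of_isCompact_closedBall ℝ
    (show (0:ℝ) < ε/2 by positivity)
    (hK.of_isClosed_subset Metric.isClosed_closedBall hsub)

end Helpers

/-- `A` is a Fredholm operator of index zero. -/
def IsFredholmIndexZero {Y : Type*} [NormedAddCommGroup Y] [NormedSpace ℝ Y]
    (A : Y →L[ℝ] Y) : Prop :=
  FiniteDimensional ℝ (LinearMap.ker (A : Y →ₗ[ℝ] Y)) ∧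
    IsClosed (LinearMap.range (A : Y →ₗ[ℝ] Y) : Set Y) ∧
    FiniteDimensional ℝ (Y ⧸ LinearMap.range (A : Y →ₗ[ℝ] Y)) ∧
    Module.finrank ℝ (LinearMap.ker (A : Y →ₗ[ℝ] Y)) =
      Module.finrank ℝ (Y ⧸ LinearMap.range (A : Y →ₗ[ℝ] Y))

/-- For a Fredholm operator `A` of index zero on a Banach space, the essential
lower norm `sup {ν(A+K) : K compact}` equals the reciprocal of
`inf {‖(A+K)⁻¹‖ : K compact, A+K invertible}`, i.e. the reciprocal of the norm
of the inverse of `A` in the Calkin algebra. -/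
theorem essential_lower_norm_eq_inv_quotient_norm
    {Y : Type*} [NormedAddCommGroup Y] [NormedSpace ℝ Y] [CompleteSpace Y]
    (A : Y →L[ℝ] Y) (hA : IsFredholmIndexZero A) :
    sSup {r : ℝ | ∃ K : Y →L[ℝ] Y, IsCompactOperator K ∧
        r = sInf {s : ℝ | ∃ x : Y, ‖x‖ = 1 ∧ s = ‖(A + K) x‖}} =
      (sInf {r : ℝ | ∃ K : Y →L[ℝ] Y, IsCompactOperator K ∧
        ∃ B : Y →L[ℝ] Y, (A + K).comp B = ContinuousLinearMap.id ℝ Y ∧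
          B.comp (A + K) = ContinuousLinearMap.id ℝ Y ∧ r = ‖B‖})⁻¹ := by
  classical
  obtain ⟨h1, h2, h3, h4⟩ := hA
  have hls : ∀ K : Y →L[ℝ] Y,
      {s : ℝ | ∃ x : Y, ‖x‖ = 1 ∧ s = ‖(A + K) x‖} = lowSet (A + K) := fun _ => rfl
  set SL := {r : ℝ | ∃ K : Y →L[ℝ] Y, IsCompactOperator K ∧
      r = sInf {s : ℝ | ∃ x : Y, ‖x‖ = 1 ∧ s = ‖(A + K) x‖}} with hSL
  set NR := {r : ℝ | ∃ K : Y →L[ℝ] Y, IsCompactOperator K ∧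
      ∃ B : Y →L[ℝ] Y, (A + K).comp B = ContinuousLinearMap.id ℝ Y ∧
        B.comp (A + K) = ContinuousLinearMap.id ℝ Y ∧ r = ‖B‖} with hNR
  by_cases hsub : Subsingleton Y
  · -- trivial space: both sides are 0
    haveI : Subsingleton (Y →L[ℝ] Y) := ⟨fun f g => by ext x; exact Subsingleton.elim _ _⟩
    have hempty : ∀ K : Y →L[ℝ] Y, lowSet (A + K) = (∅ : Set ℝ) := by
      intro K; ext s
      simp only [lowSet, Set.mem_setOf_eq, Set.mem_empty_iff_false, iff_false]
      rintro ⟨x, hx, -⟩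
      rw [Subsingleton.elim x 0, norm_zero] at hx
      exact one_ne_zero hx.symm
    have hS : SL = {0} := by
      apply Set.eq_singleton_iff_unique_mem.mpr
      refine ⟨⟨0, isCompactOperator_zero, ?_⟩, ?_⟩
      · rw [hls 0, hempty 0, Real.sInf_empty]
      · rintro r ⟨K, -, hr⟩
        rw [hls K, hempty K, Real.sInf_empty] at hr; exact hr
    have hN : NR = {0} := by
      apply Set.eq_singleton_iff_unique_mem.mpr
      constructor
      · exact ⟨0, isCompactOperator_zero, 0, Subsingleton.elim _ _,
          Subsingleton.elim _ _, norm_zero.symm⟩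
      · rintro r ⟨K, -, B, -, -, rfl⟩
        rw [Subsingleton.elim B 0, norm_zero]
    rw [hS, hN, csSup_singleton, csInf_singleton, inv_zero]
  haveI : Nontrivial Y := not_subsingleton_iff_nontrivial.mp hsub
  by_cases hfin : FiniteDimensional ℝ Y
  · -- finite-dimensional: LHS is sSup of an unbounded set (= 0 by convention),
    -- RHS is (sInf of a set with infimum 0)⁻¹ = 0⁻¹ = 0
    have hcpt : ∀ g : Y →L[ℝ] Y, IsCompactOperator ⇑g := fun g =>
      isCompactOperator_of_finiteRank (W := (⊤ : Submodule ℝ Y)) (fun _ => trivial)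
    have hAK : ∀ n : ℕ, A + (((n : ℝ) + 1) • (1 : Y →L[ℝ] Y) - A)
        = ((n : ℝ) + 1) • (1 : Y →L[ℝ] Y) := fun n => by abel
    have hnorm1 : ∀ (n : ℕ) (x : Y), ‖x‖ = 1 →
        ‖(((n : ℝ) + 1) • (1 : Y →L[ℝ] Y)) x‖ = (n : ℝ) + 1 := by
      intro n x hx
      rw [ContinuousLinearMap.smul_apply, ContinuousLinearMap.one_apply, norm_smul, hx,
        mul_one, Real.norm_eq_abs, abs_of_pos (by positivity)]
    have hmemS : ∀ n : ℕ, ((n : ℝ) + 1) ∈ SL := by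
      intro n
      refine ⟨((n : ℝ) + 1) • (1 : Y →L[ℝ] Y) - A, hcpt _, ?_⟩
      rw [hls, hAK n]
      have hset : lowSet (((n : ℝ) + 1) • (1 : Y →L[ℝ] Y)) = {((n : ℝ) + 1)} := by
        ext s
        simp only [lowSet, Set.mem_setOf_eq, Set.mem_singleton_iff]
        constructor
        · rintro ⟨x, hx, rfl⟩; exact hnorm1 n x hx
        · rintro rfl
          obtain ⟨x, hx⟩ := exists_norm_one (Y := Y)
          exact ⟨x, hx, (hnorm1 n x hx).symm⟩
      rw [hset, csInf_singleton]
    have hnb : ¬ BddAbove SL := by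
      rintro ⟨M, hM⟩
      obtain ⟨n, hn⟩ := exists_nat_gt M
      have := hM (hmemS n)
      have : M < (n : ℝ) + 1 := lt_trans hn (by linarith)
      linarith [hM (hmemS n)]
    have hmemN : ∀ n : ℕ, ((n : ℝ) + 1)⁻¹ ∈ NR := by
      intro n
      have hne : ((n : ℝ) + 1) ≠ 0 := by positivity
      refine ⟨((n : ℝ) + 1) • (1 : Y →L[ℝ] Y) - A, hcpt _,
        ((n : ℝ) + 1)⁻¹ • (1 : Y →L[ℝ] Y), ?_, ?_, ?_⟩
      · rw [hAK n]; ext x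
        simp [smul_smul, mul_inv_cancel₀ hne, inv_mul_cancel₀ hne]
      · rw [hAK n]; ext x
        simp [smul_smul, mul_inv_cancel₀ hne, inv_mul_cancel₀ hne]
      · rw [norm_smul (((n : ℝ) + 1)⁻¹) (1 : Y →L[ℝ] Y), norm_one, mul_one,
          Real.norm_eq_abs, abs_of_pos (by positivity)]
    have hbddN : BddBelow NR := ⟨0, by rintro r ⟨K, hK, B, hB1, hB2, rfl⟩; positivity⟩
    have hInf : sInf NR = 0 := by
      refine le_antisymm ?_ (le_csInf ⟨_, hmemN 0⟩
        (by rintro r ⟨K, hK, B, hB1, hB2, rfl⟩; positivity))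
      by_contra hpos
      push_neg at hpos
      obtain ⟨n, hn⟩ := exists_nat_gt (sInf NR)⁻¹
      have hle := csInf_le hbddN (hmemN n)
      have hlt : (sInf NR)⁻¹ < (n : ℝ) + 1 := lt_trans hn (by linarith)
      have h2' : ((n : ℝ) + 1)⁻¹ < sInf NR := by
        rw [show sInf NR = ((sInf NR)⁻¹)⁻¹ from (inv_inv _).symm]
        exact inv_strictAnti₀ (by positivity) hlt
      linarith
    rw [Real.sSup_of_not_bddAbove hnb, hInf, inv_zero]
  · -- infinite-dimensional case
    obtain ⟨F, hFc, hFbij⟩ := exists_compact_correction A h1 h2 h3 h4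
    obtain ⟨B₀, hB₀1, hB₀2⟩ := exists_inverse_of_bijective (A + F) hFbij
    have hB₀mem : ‖B₀‖ ∈ NR := ⟨F, hFc, B₀, hB₀1, hB₀2, rfl⟩
    have hNne : NR.Nonempty := ⟨_, hB₀mem⟩
    -- B₀ is not compact
    have hB₀nc : ¬ IsCompactOperator ⇑B₀ := by
      intro hc
      apply hfin
      apply finiteDimensional_of_isCompactOperator_id
      have hid : (fun x : Y => x) = ⇑B₀ ∘ ⇑(A + F) := by
        funext x
        have := congrArg (fun f => f x) hB₀2
        simpa using this.symm
      rw [hid]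
      exact hc.comp_clm (A + F)
    -- distance from B₀ to the compacts is positive
    set CS : Set (Y →L[ℝ] Y) := {f | IsCompactOperator ⇑f} with hCS
    have hCSclosed : IsClosed CS := isClosed_setOf_isCompactOperator
    have hCSne : CS.Nonempty := ⟨0, isCompactOperator_zero⟩
    have hδpos : 0 < infDist B₀ CS :=
      (hCSclosed.notMem_iff_infDist_pos hCSne).mp hB₀nc
    set δ := infDist B₀ CS with hδ
    -- every element of NR is ≥ δ
    have hNlb : ∀ r ∈ NR, δ ≤ r := by
      rintro r ⟨K, hK, B, hB1, hB2, rfl⟩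
      have hTB : ∀ x, (A + K) (B x) = x := fun x => by
        have := congrArg (fun f => f x) hB1; simpa using this
      have hB₀T : ∀ x, B₀ ((A + F) x) = x := fun x => by
        have := congrArg (fun f => f x) hB₀2; simpa using this
      have hdiff : B₀ - B = B₀.comp ((K - F).comp B) := by
        ext x
        have h5 : (K - F) (B x) = x - (A + F) (B x) := by
          have h6 := hTB x
          simp only [ContinuousLinearMap.sub_apply, ContinuousLinearMap.add_apply] at h6 ⊢
          calc K (B x) - F (B x) = (A (B x) + K (B x)) - (A (B x) + F (B x)) := by abel
            _ = x - (A (B x) + F (B x)) := by rw [h6]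
        show B₀ x - B x = B₀ ((K - F) (B x))
        rw [h5, map_sub, hB₀T (B x)]
      have hcomp : IsCompactOperator ⇑(B₀ - B) := by
        rw [hdiff]
        have hKF : IsCompactOperator ⇑(K - F) := hK.sub hFc
        have : ⇑(B₀.comp ((K - F).comp B)) = ⇑B₀ ∘ (⇑(K - F) ∘ ⇑B) := by
          funext x; rfl
        rw [this]
        exact (hKF.comp_clm B).clm_comp B₀
      have hmem : B₀ - B ∈ CS := hcomp
      calc δ ≤ dist B₀ (B₀ - B) := infDist_le_dist_of_mem hmem
        _ = ‖B‖ := by rw [dist_eq_norm, sub_sub_cancel]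
    have hbddN : BddBelow NR := ⟨δ, hNlb⟩
    set d := sInf NR with hd
    have hdpos : 0 < d := lt_of_lt_of_le hδpos (le_csInf hNne hNlb)
    -- each element of NR contributes its inverse to SL
    have hinvS : ∀ r ∈ NR, r⁻¹ ∈ SL := by
      rintro r ⟨K, hK, B, hB1, hB2, rfl⟩
      exact ⟨K, hK, by rw [hls]; exact (nu_of_inverse hB1 hB2).symm⟩
    -- every element of SL is at most d⁻¹
    have hSub : ∀ s ∈ SL, s ≤ d⁻¹ := by
      rintro s ⟨K, hK, rfl⟩
      rw [hls]
      rcases le_or_gt (sInf (lowSet (A + K))) 0 with hle | hpos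
      · exact hle.trans (by positivity)
      · -- A + K is injective, hence bijective by Riesz–Schauder
        have hinj : Function.Injective ⇑(A + K) := injective_of_nu_pos hpos
        set C : Y →L[ℝ] Y := B₀.comp (K - F) with hC
        have hCc : IsCompactOperator ⇑C := by
          have : ⇑C = ⇑B₀ ∘ ⇑(K - F) := by funext x; rfl
          rw [this]
          exact (hK.sub hFc).clm_comp B₀
        have hB₀T : ∀ x, B₀ ((A + F) x) = x := fun x => by
          have := congrArg (fun f => f x) hB₀2; simpa using this
        have hTB₀ : ∀ x, (A + F) (B₀ x) = x := fun x => by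
          have := congrArg (fun f => f x) hB₀1; simpa using this
        have hfact : ∀ x, (A + K) x = (A + F) ((1 + C) x) := by
          intro x
          have : (1 + C) x = x + B₀ ((K - F) x) := by
            simp [hC, ContinuousLinearMap.add_apply, ContinuousLinearMap.one_apply]
          rw [this, map_add, hTB₀ ((K - F) x)]
          simp only [ContinuousLinearMap.add_apply, ContinuousLinearMap.sub_apply]
          abel
        have hinj1C : Function.Injective ⇑(1 + C) := by
          intro a b hab
          apply hinj
          rw [hfact a, hfact b, hab]
        have hsurj1C : Function.Surjective ⇑(1 + C) :=
          surjective_of_injective_one_add_compact hCc hinj1C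
        have hbijAK : Function.Bijective ⇑(A + K) := by
          have hcoe : ⇑(A + K) = ⇑(A + F) ∘ ⇑(1 + C) := by funext x; exact hfact x
          rw [hcoe]
          exact hFbij.comp ⟨hinj1C, hsurj1C⟩
        obtain ⟨B, hB1, hB2⟩ := exists_inverse_of_bijective (A + K) hbijAK
        have hBmem : ‖B‖ ∈ NR := ⟨K, hK, B, hB1, hB2, rfl⟩
        have hnu : sInf (lowSet (A + K)) = ‖B‖⁻¹ := nu_of_inverse hB1 hB2
        rw [hnu]
        have hdB : d ≤ ‖B‖ := csInf_le hbddN hBmem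
        exact inv_anti₀ hdpos hdB
    have hSne : SL.Nonempty := ⟨‖B₀‖⁻¹, hinvS _ hB₀mem⟩
    have hSbdd : BddAbove SL := ⟨d⁻¹, hSub⟩
    have hB₀pos : 0 < ‖B₀‖ := by
      rcases (norm_nonneg B₀).lt_or_eq with h | h
      · exact h
      · exfalso
        apply hB₀nc
        have hB0 : B₀ = 0 := by
          have h7 := h.symm
          rwa [norm_eq_zero] at h7
        rw [hB0]
        exact isCompactOperator_zero
    have hSpos : 0 < sSup SL :=
      lt_of_lt_of_le (by positivity) (le_csSup hSbdd (hinvS _ hB₀mem))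
    have hge : (sSup SL)⁻¹ ≤ d := by
      refine le_csInf hNne ?_
      rintro r hr
      have hrpos : 0 < r := lt_of_lt_of_le hδpos (hNlb r hr)
      have hrS : r⁻¹ ≤ sSup SL := le_csSup hSbdd (hinvS r hr)
      calc (sSup SL)⁻¹ ≤ (r⁻¹)⁻¹ := inv_anti₀ (by positivity) hrS
        _ = r := inv_inv r
    refine le_antisymm (csSup_le hSne hSub) ?_
    calc d⁻¹ ≤ ((sSup SL)⁻¹)⁻¹ := inv_anti₀ (by positivity) hge
      _ = sSup SL := inv_inv _
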